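/- Key lemma for Theorem 1 (service reachability within two maximal travel times): Let x be a feasible state with Σ_{i,j} d(i,j) ≥ 1 and suppose V is nonempty. Then there exists a feasible trajectory of the undisturbed system from x over 2·tmax steps along which at least one waiting customer is picked up, i.e., v(τ)(k,i,j) = 1 for some step τ < 2·tmax, some vehicle k ∈ V, and some stations i, j ∈ N. -/

import Mathlib

/-! ## AMoD model (Zhang, Rossi, Pavone) -/

/-- A state of the AMoD system: waiting customers `d`, travel indicators `p`,
waiting-vehicle indicators `u`. -/
structure AMoDState (N V : Type) where
  d : N → N → ℤ
  p : V → N → ℕ → ℤ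
  u : V → N → ℤ

/-- A control of the AMoD system: customer-carrying trips `v`, rebalancing trips `w`. -/
structure AMoDControl (N V : Type) where
  v : V → N → N → ℤ
  w : V → N → N → ℤ

variable {N V : Type} [Fintype N] [DecidableEq N] [Fintype V]

/-- `Tmax i = (max_{j ≠ i} t j i) - 1`. -/
def Tmax (t : N → N → ℕ) (i : N) : ℕ :=
  ((Finset.univ : Finset N).erase i).sup (fun j => t j i) - 1

/-- `tmax = max_{i ≠ j} t i j`. -/
def tmax (t : N → N → ℕ) : ℕ :=
  ((Finset.univ : Finset N).offDiag).sup (fun p => t p.1 p.2)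

/-- `Σ_{i ∈ N} Σ_{T = 0}^{Tmax i} p k i T`. -/
def pSum (t : N → N → ℕ) (x : AMoDState N V) (k : V) : ℤ :=
  ∑ i : N, ∑ T ∈ Finset.range (Tmax t i + 1), x.p k i T

/-- Validity of a state: `d` nonnegative and zero on the diagonal,
`p` and `u` binary (and `p` vanishing out of range). -/
structure IsState (t : N → N → ℕ) (x : AMoDState N V) : Prop where
  d_nonneg : ∀ i j, 0 ≤ x.d i j
  d_diag : ∀ i, x.d i i = 0
  p_bin : ∀ k i T, T ≤ Tmax t i → x.p k i T = 0 ∨ x.p k i T = 1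
  p_oob : ∀ k i T, Tmax t i < T → x.p k i T = 0
  u_bin : ∀ k i, x.u k i = 0 ∨ x.u k i = 1

/-- Feasibility of a state: validity, constraint (P), and constraint (UP). -/
structure FeasState (t : N → N → ℕ) (x : AMoDState N V) : Prop where
  isState : IsState t x
  constrP : ∀ k, pSum t x k ≤ 1
  constrUP : ∀ k, (∑ i : N, x.u k i) + pSum t x k = 1

/-- Validity of a control: binary values, zero diagonal. -/
structure IsControl (uc : AMoDControl N V) : Prop where
  v_bin : ∀ k i j, uc.v k i j = 0 ∨ uc.v k i j = 1
  w_bin : ∀ k i j, uc.w k i j = 0 ∨ uc.w k i j = 1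
  v_diag : ∀ k i, uc.v k i i = 0
  w_diag : ∀ k i, uc.w k i i = 0

/-- Arrivals: nonnegative integers, zero on the diagonal. -/
def IsArrivals (c : N → N → ℤ) : Prop :=
  (∀ i j, 0 ≤ c i j) ∧ (∀ i, c i i = 0)

/-- Feasibility of a control at `(x, c)`: validity together with
constraints (A) and (B). -/
structure FeasControl (t : N → N → ℕ) (x : AMoDState N V) (c : N → N → ℤ)
    (uc : AMoDControl N V) : Prop where
  isControl : IsControl uc
  constrA : ∀ k i, (∑ j : N, (uc.v k i j + uc.w k i j)) ≤ x.u k i + x.p k i 0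
  constrB : ∀ i j, (∑ k : V, uc.v k i j) ≤ x.d i j + c i j

/-- The successor state `x⁺` of `x` under control `(v, w)` with arrivals `c`. -/
def succState (t : N → N → ℕ) (x : AMoDState N V) (c : N → N → ℤ)
    (uc : AMoDControl N V) : AMoDState N V where
  d := fun i j => x.d i j + c i j - ∑ k : V, uc.v k i j
  p := fun k i T =>
    if T < Tmax t i then
      x.p k i (T + 1) +
        ∑ j ∈ Finset.univ.filter (fun j => t j i = T + 1), (uc.v k j i + uc.w k j i)
    else if T = Tmax t i then
      ∑ j ∈ Finset.univ.filter (fun j => t j i = Tmax t i + 1), (uc.v k j i + uc.w k j i)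
    else 0
  u := fun k i => x.u k i + x.p k i 0 - ∑ j : N, (uc.v k i j + uc.w k i j)

/-- A feasible trajectory of the undisturbed system (`c ≡ 0`) from `x` over `n` steps. -/
def FeasTraj (t : N → N → ℕ) (x : AMoDState N V) (n : ℕ)
    (xs : ℕ → AMoDState N V) (cs : ℕ → AMoDControl N V) : Prop :=
  xs 0 = x ∧ ∀ τ < n, FeasControl t (xs τ) (fun _ _ => 0) (cs τ) ∧
    xs (τ + 1) = succState t (xs τ) (fun _ _ => 0) (cs τ)

/-- The primary cost: total number of waiting customers. -/
def Jx (x : AMoDState N V) : ℤ := ∑ i : N, ∑ j : N, x.d i j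

/-- The secondary cost: total rebalancing travel time. -/
def Ju (t : N → N → ℕ) (uc : AMoDControl N V) : ℤ :=
  ∑ k : V, ∑ i : N, ∑ j : N, (t i j : ℤ) * uc.w k i j

/-- The MPC cost of a plan over the horizon `thor`. -/
def planCost (t : N → N → ℕ) (ρ1 : ℝ) (thor : ℕ)
    (xs : ℕ → AMoDState N V) (cs : ℕ → AMoDControl N V) : ℝ :=
  ∑ τ ∈ Finset.range thor, ((Jx (xs (τ + 1)) : ℝ) + ρ1 * (Ju t (cs τ) : ℝ))

/-- An MPC-optimal plan at a feasible state `x`. -/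
def MPCOptimal (t : N → N → ℕ) (ρ1 : ℝ) (thor : ℕ) (x : AMoDState N V)
    (xs : ℕ → AMoDState N V) (cs : ℕ → AMoDControl N V) : Prop :=
  FeasTraj t x thor xs cs ∧
    ∀ ys ds, FeasTraj t x thor ys ds →
      planCost t ρ1 thor xs cs ≤ planCost t ρ1 thor ys ds

/-- An (infinite) MPC trajectory of the undisturbed system: a feasible trajectory in
which every applied control is the first control of some MPC-optimal plan. -/
def MPCTraj (t : N → N → ℕ) (ρ1 : ℝ) (thor : ℕ)
    (xs : ℕ → AMoDState N V) (cs : ℕ → AMoDControl N V) : Prop :=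
  (∀ τ, FeasControl t (xs τ) (fun _ _ => 0) (cs τ) ∧
      xs (τ + 1) = succState t (xs τ) (fun _ _ => 0) (cs τ)) ∧
  (∀ τ, ∃ ys ds, MPCOptimal t ρ1 thor (xs τ) ys ds ∧ ds 0 = cs τ)

/-! ## Auxiliary definitions and lemmas for the proof -/

section Aux
variable {N V : Type} [Fintype N] [DecidableEq N] [Fintype V]

/-- The zero control. -/
def ZCtl : AMoDControl N V := ⟨fun _ _ _ => 0, fun _ _ _ => 0⟩

/-- Nonnegativity of a state. -/
def NNeg (x : AMoDState N V) : Prop :=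
  (∀ i j, 0 ≤ x.d i j) ∧ (∀ k i T, 0 ≤ x.p k i T) ∧ (∀ k i, 0 ≤ x.u k i)

/-- One step of the undisturbed dynamics under the zero control. -/
def zstep (t : N → N → ℕ) (y : AMoDState N V) : AMoDState N V :=
  succState t y (fun _ _ => 0) ZCtl

/-- Iterates of `zstep`. -/
def zIter (t : N → N → ℕ) (y : AMoDState N V) : ℕ → AMoDState N V
  | 0 => y
  | n + 1 => zstep t (zIter t y n)

lemma zstep_d (t : N → N → ℕ) (y : AMoDState N V) (i j : N) :
    (zstep t y).d i j = y.d i j := by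
  simp [zstep, succState, ZCtl]

lemma zstep_p (t : N → N → ℕ) (y : AMoDState N V) (k : V) (i : N) (T : ℕ) :
    (zstep t y).p k i T = if T < Tmax t i then y.p k i (T + 1) else 0 := by
  simp [zstep, succState, ZCtl]

lemma zstep_u (t : N → N → ℕ) (y : AMoDState N V) (k : V) (i : N) :
    (zstep t y).u k i = y.u k i + y.p k i 0 := by
  simp [zstep, succState, ZCtl]

lemma zstep_nneg {t : N → N → ℕ} {y : AMoDState N V} (h : NNeg y) : NNeg (zstep t y) := by
  obtain ⟨hd, hp, hu⟩ := h
  refine ⟨fun i j => ?_, fun k i T => ?_, fun k i => ?_⟩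
  · rw [zstep_d]; exact hd i j
  · rw [zstep_p]; split
    · exact hp k i (T + 1)
    · exact le_refl 0
  · rw [zstep_u]; exact add_nonneg (hu k i) (hp k i 0)

lemma zIter_nneg {t : N → N → ℕ} {y : AMoDState N V} (h : NNeg y) (s : ℕ) :
    NNeg (zIter t y s) := by
  induction s with
  | zero => exact h
  | succ n ih => exact zstep_nneg ih

lemma zIter_d (t : N → N → ℕ) (y : AMoDState N V) (s : ℕ) (i j : N) :
    (zIter t y s).d i j = y.d i j := by
  induction s with
  | zero => rfl
  | succ n ih => rw [show zIter t y (n+1) = zstep t (zIter t y n) from rfl, zstep_d, ih]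

lemma zIter_p_shift {t : N → N → ℕ} {y : AMoDState N V} {k : V} {i : N} {T : ℕ}
    (hT : T ≤ Tmax t i) (hp : 1 ≤ y.p k i T) :
    ∀ s, s ≤ T → 1 ≤ (zIter t y s).p k i (T - s) := by
  intro s
  induction s with
  | zero => intro _; simpa [zIter] using hp
  | succ n ih =>
    intro h
    have h1 : (zIter t y (n+1)).p k i (T - (n+1)) = (zIter t y n).p k i (T - n) := by
      rw [show zIter t y (n+1) = zstep t (zIter t y n) from rfl, zstep_p,
        if_pos (by omega : T - (n+1) < Tmax t i)]
      congr 1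
      omega
    rw [h1]
    exact ih (by omega)

lemma zctl_feas {t : N → N → ℕ} {y : AMoDState N V} (h : NNeg y) :
    FeasControl t y (fun _ _ => 0) (ZCtl : AMoDControl N V) := by
  refine ⟨⟨fun _ _ _ => Or.inl rfl, fun _ _ _ => Or.inl rfl, fun _ _ => rfl, fun _ _ => rfl⟩,
    fun k i => ?_, fun i j => ?_⟩
  · simpa [ZCtl] using add_nonneg (h.2.2 k i) (h.2.1 k i 0)
  · simpa [ZCtl] using h.1 i j

lemma succ_nneg {t : N → N → ℕ} {y : AMoDState N V} {uc : AMoDControl N V}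
    (hNN : NNeg y) (hfc : FeasControl t y (fun _ _ => 0) uc) :
    NNeg (succState t y (fun _ _ => 0) uc) := by
  obtain ⟨hd, hp, hu⟩ := hNN
  have hv0 : ∀ k i j, 0 ≤ uc.v k i j := fun k i j => by
    rcases hfc.isControl.v_bin k i j with h | h <;> omega
  have hw0 : ∀ k i j, 0 ≤ uc.w k i j := fun k i j => by
    rcases hfc.isControl.w_bin k i j with h | h <;> omega
  refine ⟨fun i j => ?_, fun k i T => ?_, fun k i => ?_⟩
  · have hB := hfc.constrB i j
    simp only [succState]
    linarith
  · simp only [succState]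
    split
    · exact add_nonneg (hp k i (T+1))
        (Finset.sum_nonneg fun j _ => add_nonneg (hv0 k j i) (hw0 k j i))
    · split
      · exact Finset.sum_nonneg fun j _ => add_nonneg (hv0 k j i) (hw0 k j i)
      · exact le_refl 0
  · have hA := hfc.constrA k i
    simp only [succState]
    linarith

end Aux

/-- **Key lemma for Theorem 1 (service reachability within two maximal travel times):**
from any feasible state with at least one waiting customer there is a feasible
trajectory of the undisturbed system over `2·tmax` steps along which at least one
waiting customer is picked up. -/

theorem service_reachability {N V : Type} [Fintype N] [DecidableEq N] [Fintype V]
    [Nonempty V] (t : N → N → ℕ) (hcard : 2 ≤ Fintype.card N)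
    (ht : ∀ i j : N, i ≠ j → 1 ≤ t i j)
    (x : AMoDState N V) (hx : FeasState t x)
    (hd : 1 ≤ ∑ i : N, ∑ j : N, x.d i j) :
    ∃ (xs : ℕ → AMoDState N V) (cs : ℕ → AMoDControl N V),
      FeasTraj t x (2 * tmax t) xs cs ∧
        ∃ τ < 2 * tmax t, ∃ (k : V) (i j : N), (cs τ).v k i j = 1 := by
  classical
  -- nonnegativity of the initial state
  have hxNN : NNeg x := by
    refine ⟨hx.isState.d_nonneg, fun k i T => ?_, fun k i => ?_⟩
    · rcases le_or_gt T (Tmax t i) with h | h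
      · rcases hx.isState.p_bin k i T h with h0 | h0 <;> omega
      · rw [hx.isState.p_oob k i T h]
    · rcases hx.isState.u_bin k i with h0 | h0 <;> omega
  -- basic travel-time facts
  have httle : ∀ i j : N, i ≠ j → t i j ≤ tmax t := by
    intro i j hij
    exact Finset.le_sup (f := fun p : N × N => t p.1 p.2) (b := (i, j))
      (by simp [Finset.mem_offDiag, hij])
  have htm1 : 1 ≤ tmax t := by
    obtain ⟨i, j, hij⟩ := Fintype.exists_pair_of_one_lt_card (α := N) (by omega)
    exact le_trans (ht i j hij) (httle i j hij)
  have hTle : ∀ i : N, Tmax t i ≤ tmax t - 1 := by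
    intro i
    have : ((Finset.univ : Finset N).erase i).sup (fun j => t j i) ≤ tmax t := by
      apply Finset.sup_le
      intro j hj
      exact httle j i (Finset.ne_of_mem_erase hj)
    unfold Tmax
    omega
  -- a waiting customer
  obtain ⟨iS, jS, hdij⟩ : ∃ i j, 1 ≤ x.d i j := by
    by_contra h
    push_neg at h
    have : ∀ i j, x.d i j = 0 := fun i j =>
      le_antisymm (by have := h i j; omega) (hx.isState.d_nonneg i j)
    simp [this] at hd
  have hij : iS ≠ jS := by
    intro h
    rw [h, hx.isState.d_diag jS] at hdij
    omega
  -- a vehicle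
  obtain ⟨k⟩ := (inferInstance : Nonempty V)
  -- availability of vehicle k at station i0 at time a < tmax
  obtain ⟨i0, a, ha, havail⟩ :
      ∃ (i0 : N) (a : ℕ), a ≤ tmax t - 1 ∧
        1 ≤ (zIter t x a).u k i0 + (zIter t x a).p k i0 0 := by
    have hexists : (∃ i0, 1 ≤ x.u k i0) ∨ ∃ i0 T0, T0 ≤ Tmax t i0 ∧ 1 ≤ x.p k i0 T0 := by
      by_contra h
      push_neg at h
      obtain ⟨h1, h2⟩ := h
      have hu0 : ∀ i, x.u k i = 0 := fun i => by
        rcases hx.isState.u_bin k i with h0 | h0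
        · exact h0
        · exact absurd (h0 ▸ le_refl (1:ℤ)) (by have := h1 i; omega)
      have hp0 : ∀ i T, x.p k i T = 0 := by
        intro i T
        rcases le_or_gt T (Tmax t i) with hT | hT
        · rcases hx.isState.p_bin k i T hT with h0 | h0
          · exact h0
          · have := h2 i T hT; omega
        · exact hx.isState.p_oob k i T hT
      have := hx.constrUP k
      simp [pSum, hu0, hp0] at this
    rcases hexists with ⟨i0, hu⟩ | ⟨i0, T0, hT0, hp⟩
    · exact ⟨i0, 0, by omega, by
        have := hxNN.2.1 k i0 0
        show 1 ≤ x.u k i0 + x.p k i0 0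
        omega⟩
    · refine ⟨i0, T0, by have := hTle i0; omega, ?_⟩
      have hps := zIter_p_shift hT0 hp T0 le_rfl
      simp only [Nat.sub_self] at hps
      have := (zIter_nneg hxNN T0 : NNeg (zIter t x T0)).2.2 k i0
      omega
  set y := zIter t x a with hy
  have hyNN : NNeg y := zIter_nneg hxNN a
  have hyd : ∀ i j, y.d i j = x.d i j := fun i j => zIter_d t x a i j
  by_cases hii : i0 = iS
  · -- the vehicle becomes available at the pickup station: pick up at time a
    subst hii
    -- the pickup control
    set pc : AMoDControl N V :=
      ⟨fun k' i' j' => if k' = k ∧ i' = i0 ∧ j' = jS then 1 else 0, fun _ _ _ => 0⟩ with hpc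
    have hsumv : ∀ k' i', (∑ j : N, (pc.v k' i' j + pc.w k' i' j))
        = if k' = k ∧ i' = i0 then 1 else 0 := by
      intro k' i'
      simp only [hpc, add_zero]
      by_cases h : k' = k ∧ i' = i0
      · obtain ⟨h1, h2⟩ := h
        subst h1; subst h2
        simp
      · rw [if_neg h]
        apply Finset.sum_eq_zero
        intro j _
        rw [if_neg]
        tauto
    have hpcfeas : FeasControl t y (fun _ _ => 0) pc := by
      refine ⟨⟨fun k' i' j' => by by_cases h : k' = k ∧ i' = i0 ∧ j' = jS <;>
          simp [hpc, h], fun _ _ _ => Or.inl rfl,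
          fun k' i' => by simp only [hpc]; rw [if_neg]; rintro ⟨_, h1, h2⟩; exact hij (h1 ▸ h2),
          fun _ _ => rfl⟩, fun k' i' => ?_, fun i j => ?_⟩
      · rw [hsumv]
        split_ifs with h
        · obtain ⟨h1, h2⟩ := h; subst h1; subst h2; exact havail
        · exact add_nonneg (hyNN.2.2 k' i') (hyNN.2.1 k' i' 0)
      · have : (∑ k' : V, pc.v k' i j) = if i = i0 ∧ j = jS then 1 else 0 := by
          simp only [hpc]
          by_cases h : i = i0 ∧ j = jS
          · obtain ⟨h1, h2⟩ := h; subst h1; subst h2; simp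
          · rw [if_neg h]
            apply Finset.sum_eq_zero
            intro k' _
            rw [if_neg]
            tauto
        rw [this]
        split_ifs with h
        · obtain ⟨h1, h2⟩ := h; subst h1; subst h2
          rw [hyd]
          omega
        · have := hyNN.1 i j; omega
    set z3 := succState t y (fun _ _ => 0) pc with hz3
    have hz3NN : NNeg z3 := succ_nneg hyNN hpcfeas
    -- schedule
    set cs : ℕ → AMoDControl N V := fun τ => if τ = a then pc else ZCtl with hcs
    set xs : ℕ → AMoDState N V :=
      fun n => Nat.rec x (fun m prev => succState t prev (fun _ _ => 0) (cs m)) n with hxs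
    have hstep : ∀ τ, xs (τ + 1) = succState t (xs τ) (fun _ _ => 0) (cs τ) := fun τ => rfl
    have I1 : ∀ s, s ≤ a → xs s = zIter t x s := by
      intro s
      induction s with
      | zero => intro _; rfl
      | succ n ih =>
        intro h
        rw [hstep n, ih (by omega), show cs n = ZCtl from if_neg (by omega)]
        rfl
    have hxsa : xs a = y := I1 a le_rfl
    have hxsa1 : xs (a + 1) = z3 := by
      rw [hstep a, hxsa, show cs a = pc from if_pos rfl]
    have I3 : ∀ m, xs (a + 1 + m) = zIter t z3 m := by
      intro m
      induction m with
      | zero => exact hxsa1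
      | succ n ih =>
        rw [show a + 1 + (n + 1) = (a + 1 + n) + 1 by omega, hstep, ih,
          show cs (a + 1 + n) = ZCtl from if_neg (by omega)]
        rfl
    have hNN : ∀ s, NNeg (xs s) := by
      intro s
      rcases le_or_gt s a with h | h
      · rw [I1 s h]; exact zIter_nneg hxNN s
      · rw [show s = a + 1 + (s - a - 1) by omega, I3]
        exact zIter_nneg hz3NN _
    refine ⟨xs, cs, ⟨rfl, fun τ _ => ⟨?_, hstep τ⟩⟩, a, by omega, k, i0, jS, ?_⟩
    · by_cases hτ : τ = a
      · subst hτ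
        rw [hxsa, show cs τ = pc from if_pos rfl]
        exact hpcfeas
      · rw [show cs τ = ZCtl from if_neg hτ]
        exact zctl_feas (hNN τ)
    · rw [show cs a = pc from if_pos rfl]
      simp [hpc]
  · -- rebalance from i0 to iS, then pick up
    set tt := t i0 iS with htt
    have htt1 : 1 ≤ tt := ht i0 iS hii
    have httmax : tt ≤ tmax t := httle i0 iS hii
    have hTS : tt - 1 ≤ Tmax t iS := by
      have : tt ≤ ((Finset.univ : Finset N).erase iS).sup (fun j => t j iS) :=
        Finset.le_sup (f := fun j => t j iS) (b := i0) (by simp [Finset.mem_erase, hii])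
      unfold Tmax
      omega
    -- the rebalancing control
    set wc : AMoDControl N V :=
      ⟨fun _ _ _ => 0, fun k' i' j' => if k' = k ∧ i' = i0 ∧ j' = iS then 1 else 0⟩ with hwc
    have hsumw : ∀ k' i', (∑ j : N, (wc.v k' i' j + wc.w k' i' j))
        = if k' = k ∧ i' = i0 then 1 else 0 := by
      intro k' i'
      simp only [hwc, zero_add]
      by_cases h : k' = k ∧ i' = i0
      · obtain ⟨h1, h2⟩ := h; subst h1; subst h2; simp
      · rw [if_neg h]
        apply Finset.sum_eq_zero
        intro j _
        rw [if_neg]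
        tauto
    have hwcfeas : FeasControl t y (fun _ _ => 0) wc := by
      refine ⟨⟨fun _ _ _ => Or.inl rfl,
          fun k' i' j' => by by_cases h : k' = k ∧ i' = i0 ∧ j' = iS <;> simp [hwc, h],
          fun _ _ => rfl,
          fun k' i' => by simp only [hwc]; rw [if_neg]; rintro ⟨_, h1, h2⟩; exact hii (h1 ▸ h2)⟩,
          fun k' i' => ?_, fun i j => ?_⟩
      · rw [hsumw]
        split_ifs with h
        · obtain ⟨h1, h2⟩ := h; subst h1; subst h2; exact havail
        · exact add_nonneg (hyNN.2.2 k' i') (hyNN.2.1 k' i' 0)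
      · have : (∑ k' : V, wc.v k' i j) = 0 := by simp [hwc]
        rw [this]
        have := hyNN.1 i j
        omega
    set z1 := succState t y (fun _ _ => 0) wc with hz1
    have hz1NN : NNeg z1 := succ_nneg hyNN hwcfeas
    have hz1d : ∀ i j, z1.d i j = y.d i j := by
      intro i j
      simp [hz1, succState, hwc]
    have hfil : ∀ (s : Finset N), i0 ∈ s →
        (∑ j ∈ s, (wc.v k j iS + wc.w k j iS)) = 1 := by
      intro s hs
      rw [Finset.sum_eq_single i0]
      · simp [hwc]
      · intro j _ hj
        simp only [hwc, zero_add]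
        rw [if_neg]
        tauto
      · intro h; exact absurd hs h
    have hz1p : 1 ≤ z1.p k iS (tt - 1) := by
      rcases lt_or_eq_of_le hTS with hlt | heq
      · have : z1.p k iS (tt - 1) = y.p k iS (tt - 1 + 1) +
            ∑ j ∈ Finset.univ.filter (fun j => t j iS = tt - 1 + 1), (wc.v k j iS + wc.w k j iS) := by
          simp only [hz1, succState]
          rw [if_pos hlt]
        rw [this, hfil _ (by simp only [Finset.mem_filter, Finset.mem_univ, true_and]; omega)]
        have := hyNN.2.1 k iS (tt - 1 + 1)
        omega
      · have : z1.p k iS (tt - 1) =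
            ∑ j ∈ Finset.univ.filter (fun j => t j iS = Tmax t iS + 1), (wc.v k j iS + wc.w k j iS) := by
          simp only [hz1, succState]
          rw [if_neg (by omega), if_pos heq]
        rw [this, hfil _ (by simp only [Finset.mem_filter, Finset.mem_univ, true_and]; omega)]
    set z2 := zIter t z1 (tt - 1) with hz2
    have hz2NN : NNeg z2 := zIter_nneg hz1NN _
    have hz2p0 : 1 ≤ z2.p k iS 0 := by
      have := zIter_p_shift hTS hz1p (tt - 1) le_rfl
      simpa using this
    have hz2d : ∀ i j, z2.d i j = x.d i j := by
      intro i j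
      rw [hz2, zIter_d, hz1d, hyd]
    -- the pickup control
    set pc : AMoDControl N V :=
      ⟨fun k' i' j' => if k' = k ∧ i' = iS ∧ j' = jS then 1 else 0, fun _ _ _ => 0⟩ with hpc
    have hsumv : ∀ k' i', (∑ j : N, (pc.v k' i' j + pc.w k' i' j))
        = if k' = k ∧ i' = iS then 1 else 0 := by
      intro k' i'
      simp only [hpc, add_zero]
      by_cases h : k' = k ∧ i' = iS
      · obtain ⟨h1, h2⟩ := h; subst h1; subst h2; simp
      · rw [if_neg h]
        apply Finset.sum_eq_zero
        intro j _
        rw [if_neg]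
        tauto
    have hpcfeas : FeasControl t z2 (fun _ _ => 0) pc := by
      refine ⟨⟨fun k' i' j' => by by_cases h : k' = k ∧ i' = iS ∧ j' = jS <;> simp [hpc, h],
          fun _ _ _ => Or.inl rfl,
          fun k' i' => by simp only [hpc]; rw [if_neg]; rintro ⟨_, h1, h2⟩; exact hij (h1 ▸ h2),
          fun _ _ => rfl⟩, fun k' i' => ?_, fun i j => ?_⟩
      · rw [hsumv]
        split_ifs with h
        · obtain ⟨h1, h2⟩ := h
          rw [h1, h2]
          have hA := hz2NN.2.2 k iS
          have hB := hz2p0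
          omega
        · exact add_nonneg (hz2NN.2.2 k' i') (hz2NN.2.1 k' i' 0)
      · have : (∑ k' : V, pc.v k' i j) = if i = iS ∧ j = jS then 1 else 0 := by
          simp only [hpc]
          by_cases h : i = iS ∧ j = jS
          · obtain ⟨h1, h2⟩ := h; subst h1; subst h2; simp
          · rw [if_neg h]
            apply Finset.sum_eq_zero
            intro k' _
            rw [if_neg]
            tauto
        rw [this]
        split_ifs with h
        · obtain ⟨h1, h2⟩ := h; subst h1; subst h2
          rw [hz2d]
          omega
        · have := hz2NN.1 i j; omega
    set z3 := succState t z2 (fun _ _ => 0) pc with hz3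
    have hz3NN : NNeg z3 := succ_nneg hz2NN hpcfeas
    -- schedule
    set cs : ℕ → AMoDControl N V :=
      fun τ => if τ = a then wc else if τ = a + tt then pc else ZCtl with hcs
    set xs : ℕ → AMoDState N V :=
      fun n => Nat.rec x (fun m prev => succState t prev (fun _ _ => 0) (cs m)) n with hxs
    have hstep : ∀ τ, xs (τ + 1) = succState t (xs τ) (fun _ _ => 0) (cs τ) := fun τ => rfl
    have hcs0 : ∀ τ, τ ≠ a → τ ≠ a + tt → cs τ = ZCtl := by
      intro τ h1 h2
      rw [hcs]
      simp [h1, h2]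
    have I1 : ∀ s, s ≤ a → xs s = zIter t x s := by
      intro s
      induction s with
      | zero => intro _; rfl
      | succ n ih =>
        intro h
        rw [hstep n, ih (by omega), hcs0 n (by omega) (by omega)]
        rfl
    have hxsa : xs a = y := I1 a le_rfl
    have hxsa1 : xs (a + 1) = z1 := by
      rw [hstep a, hxsa, show cs a = wc from if_pos rfl]
    have I2 : ∀ m, m ≤ tt - 1 → xs (a + 1 + m) = zIter t z1 m := by
      intro m
      induction m with
      | zero => intro _; exact hxsa1
      | succ n ih =>
        intro h
        rw [show a + 1 + (n + 1) = (a + 1 + n) + 1 by omega, hstep,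
          ih (by omega), hcs0 (a + 1 + n) (by omega) (by omega)]
        rfl
    have hxsb : xs (a + tt) = z2 := by
      rw [show a + tt = a + 1 + (tt - 1) by omega, I2 (tt - 1) le_rfl]
    have hxsb1 : xs (a + tt + 1) = z3 := by
      rw [hstep, hxsb, show cs (a + tt) = pc by rw [hcs]; simp; omega]
    have I3 : ∀ m, xs (a + tt + 1 + m) = zIter t z3 m := by
      intro m
      induction m with
      | zero => exact hxsb1
      | succ n ih =>
        rw [show a + tt + 1 + (n + 1) = (a + tt + 1 + n) + 1 by omega, hstep, ih,
          hcs0 (a + tt + 1 + n) (by omega) (by omega)]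
        rfl
    have hNN : ∀ s, NNeg (xs s) := by
      intro s
      rcases le_or_gt s a with h | h
      · rw [I1 s h]; exact zIter_nneg hxNN s
      · rcases le_or_gt s (a + tt) with h2 | h2
        · rw [show s = a + 1 + (s - a - 1) by omega, I2 (s - a - 1) (by omega)]
          exact zIter_nneg hz1NN _
        · rw [show s = a + tt + 1 + (s - a - tt - 1) by omega, I3]
          exact zIter_nneg hz3NN _
    refine ⟨xs, cs, ⟨rfl, fun τ _ => ⟨?_, hstep τ⟩⟩, a + tt, by omega, k, iS, jS, ?_⟩
    · by_cases hτ1 : τ = a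
      · subst hτ1
        rw [hxsa, show cs τ = wc from if_pos rfl]
        exact hwcfeas
      · by_cases hτ2 : τ = a + tt
        · subst hτ2
          rw [hxsb, show cs (a + tt) = pc by rw [hcs]; simp; omega]
          exact hpcfeas
        · rw [hcs0 τ hτ1 hτ2]
          exact zctl_feas (hNN τ)
    · rw [show cs (a + tt) = pc by rw [hcs]; simp; omega]
      simp [hpc]
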